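/- Fix a finite signature τ with only unary function symbols, a nesting-depth bound m, and 4-tuples as parameters. For every sufficiently large n and every τ-structure S whose domain contains distinct elements a_1, ..., a_n, s, t, there exist indices i < j such that the equality type of the (m+1)-neighborhood vector of (a_i, a_j, s, t) and that of (a_j, a_i, s, t) coincide. -/

import Mathlib

/-- Evaluation of a word of unary function symbols (a term of the corresponding
nesting depth) at an element. -/
def evalW {F X : Type} (interp : F → X → X) : List F → X → X
  | [], x => x
  | f :: w, x => interp f (evalW interp w x)

/-- Words of unary function symbols of length (= term nesting depth) at most `k`. -/
def Wd (F : Type) (k : ℕ) : Type := {w : List F // w.length ≤ k}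

/-- There are only finitely many words of bounded length over a finite alphabet. -/
instance WdFinite (F : Type) [Fintype F] (k : ℕ) : Finite (Wd F k) := by
  have hinj : Function.Injective (fun w : Wd F k => (fun i : Fin k => w.1[(i : ℕ)]?)) := by
    intro w1 w2 h
    apply Subtype.ext
    apply List.ext_getElem?
    intro n
    by_cases hn : n < k
    · exact congrFun h ⟨n, hn⟩
    · rw [List.getElem?_eq_none_iff.2 (w1.2.trans (Nat.le_of_not_lt hn)),
        List.getElem?_eq_none_iff.2 (w2.2.trans (Nat.le_of_not_lt hn))]
  exact Finite.of_injective _ hinj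

/-- Size bound for the iterated pigeonhole construction. -/
def gfun (r : ℕ) : ℕ → ℕ
  | 0 => 0
  | k+1 => r * gfun r k + 1

/-- Iterated pigeonhole: in any sufficiently large finite set of indices one can find
an increasing sequence `b` such that the color of the pair `(b p, b q)` (for `p < q`)
depends only on `p`. -/
lemma seq_lemma {ι C : Type} [LinearOrder ι] [Fintype C] [DecidableEq C] [Nonempty C]
    (χ : ι → ι → C) :
    ∀ (k : ℕ) (S : Finset ι), gfun (Fintype.card C) k ≤ S.card →
    ∃ b : Fin k → ι, StrictMono b ∧ (∀ p, b p ∈ S) ∧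
      ∃ c : Fin k → C, ∀ p q : Fin k, p < q → χ (b p) (b q) = c p := by
  intro k
  induction k with
  | zero =>
    intro S _
    exact ⟨Fin.elim0, fun p => p.elim0, fun p => p.elim0, Fin.elim0, fun p => p.elim0⟩
  | succ k ih =>
    intro S hS
    have hg : gfun (Fintype.card C) (k+1) = Fintype.card C * gfun (Fintype.card C) k + 1 := rfl
    have hSne : S.Nonempty := by
      rw [← Finset.card_pos]; omega
    set x := S.min' hSne with hx
    have hxS : x ∈ S := S.min'_mem hSne
    have hTcard : Fintype.card C * gfun (Fintype.card C) k ≤ (S.erase x).card := by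
      have := Finset.card_erase_of_mem hxS
      omega
    obtain ⟨c0, -, hc0⟩ := Finset.exists_le_card_fiber_of_mul_le_card_of_maps_to
      (f := fun j => χ x j) (t := (Finset.univ : Finset C))
      (fun a _ => Finset.mem_univ _) Finset.univ_nonempty
      (by rwa [Finset.card_univ])
    set T' := {j ∈ S.erase x | χ x j = c0} with hT'
    obtain ⟨b', hmono', hmem', c', hc'⟩ := ih T' hc0
    have hmemE : ∀ p, b' p ∈ S.erase x := fun p => (Finset.mem_filter.1 (hmem' p)).1
    have hxlt : ∀ p, x < b' p := by
      intro p
      have h1 := Finset.mem_erase.1 (hmemE p)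
      exact lt_of_le_of_ne (S.min'_le _ h1.2) (Ne.symm h1.1)
    refine ⟨Fin.cons x b', ?_, ?_, Fin.cons c0 c', ?_⟩
    · intro p q hpq
      induction q using Fin.cases with
      | zero => exact absurd hpq (by simp)
      | succ q' =>
        induction p using Fin.cases with
        | zero => simpa using hxlt q'
        | succ p' =>
          simp only [Fin.cons_succ]
          exact hmono' (by exact_mod_cast Fin.succ_lt_succ_iff.1 hpq)
    · intro p
      induction p using Fin.cases with
      | zero => simpa using hxS
      | succ p' =>
        simp only [Fin.cons_succ]
        exact Finset.mem_of_mem_erase (hmemE p')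
    · intro p q hpq
      induction q using Fin.cases with
      | zero => exact absurd hpq (by simp)
      | succ q' =>
        induction p using Fin.cases with
        | zero =>
          simp only [Fin.cons_zero, Fin.cons_succ]
          exact (Finset.mem_filter.1 (hmem' q')).2
        | succ p' =>
          simp only [Fin.cons_succ]
          exact hc' p' q' (Fin.succ_lt_succ_iff.1 hpq)

/-- Ramsey-type statement for pairs: if `n` is large enough, any coloring of ordered
pairs of elements of `Fin n` admits indices `i < j < l` such that the three increasing
pairs get the same color. -/
lemma triangle_lemma {n : ℕ} {C : Type} [Fintype C] [DecidableEq C] [Nonempty C]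
    (χ : Fin n → Fin n → C)
    (hn : gfun (Fintype.card C) (Fintype.card C + 2) ≤ n) :
    ∃ i j l : Fin n, i < j ∧ j < l ∧ χ i j = χ j l ∧ χ i j = χ i l := by
  set r := Fintype.card C with hr
  obtain ⟨b, hmono, -, c, hc⟩ := seq_lemma χ (r + 2) (Finset.univ : Finset (Fin n))
    (by rwa [Finset.card_univ, Fintype.card_fin])
  obtain ⟨p, q, hpq, hcpq⟩ := Fintype.exists_ne_map_eq_of_card_lt
    (fun p : Fin (r+1) => c p.castSucc) (by simp; omega)
  rcases hpq.lt_or_gt with hlt | hlt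
  case inl =>
    refine ⟨b p.castSucc, b q.castSucc, b (Fin.last (r+1)), hmono (by simpa using hlt),
      hmono (Fin.castSucc_lt_last _), ?_, ?_⟩
    · rw [hc _ _ (by simpa using hlt), hc _ _ (Fin.castSucc_lt_last _), hcpq]
    · rw [hc _ _ (by simpa using hlt), hc _ _
        ((by simpa using hlt : p.castSucc < q.castSucc).trans (Fin.castSucc_lt_last _))]
  case inr =>
    refine ⟨b q.castSucc, b p.castSucc, b (Fin.last (r+1)), hmono (by simpa using hlt),
      hmono (Fin.castSucc_lt_last _), ?_, ?_⟩
    · rw [hc _ _ (by simpa using hlt), hc _ _ (Fin.castSucc_lt_last _), hcpq]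
    · rw [hc _ _ (by simpa using hlt), hc _ _
        ((by simpa using hlt : q.castSucc < p.castSucc).trans (Fin.castSucc_lt_last _))]

/-- The combinatorial core: if the equality types of the neighborhood vectors of
`(x1,x2,s,t)`, `(x2,x3,s,t)` and `(x1,x3,s,t)` all coincide, then the equality type is
invariant under swapping the first two components. -/
lemma key_lemma {X W : Type} (f : W → X → X) (s t x1 x2 x3 : X)
    (h1 : ∀ (c d : Fin 4) (w v : W),
      f w (![x1,x2,s,t] c) = f v (![x1,x2,s,t] d) ↔
        f w (![x2,x3,s,t] c) = f v (![x2,x3,s,t] d))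
    (h2 : ∀ (c d : Fin 4) (w v : W),
      f w (![x1,x2,s,t] c) = f v (![x1,x2,s,t] d) ↔
        f w (![x1,x3,s,t] c) = f v (![x1,x3,s,t] d)) :
    ∀ (c d : Fin 4) (w v : W),
      f w (![x1,x2,s,t] c) = f v (![x1,x2,s,t] d) ↔
        f w (![x2,x1,s,t] c) = f v (![x2,x1,s,t] d) := by
  have h1_00 : ∀ w v : W, (f w x1 = f v x1 ↔ f w x2 = f v x2) := by
    intro w v; simpa using h1 0 0 w v
  have h1_01 : ∀ w v : W, (f w x1 = f v x2 ↔ f w x2 = f v x3) := by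
    intro w v; simpa using h1 0 1 w v
  have h1_10 : ∀ w v : W, (f w x2 = f v x1 ↔ f w x3 = f v x2) := by
    intro w v; simpa using h1 1 0 w v
  have h1_02 : ∀ w v : W, (f w x1 = f v s ↔ f w x2 = f v s) := by
    intro w v; simpa using h1 0 2 w v
  have h1_03 : ∀ w v : W, (f w x1 = f v t ↔ f w x2 = f v t) := by
    intro w v; simpa using h1 0 3 w v
  have h1_20 : ∀ w v : W, (f w s = f v x1 ↔ f w s = f v x2) := by
    intro w v; simpa using h1 2 0 w v
  have h1_30 : ∀ w v : W, (f w t = f v x1 ↔ f w t = f v x2) := by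
    intro w v; simpa using h1 3 0 w v
  have h2_01 : ∀ w v : W, (f w x1 = f v x2 ↔ f w x1 = f v x3) := by
    intro w v; simpa using h2 0 1 w v
  have h2_10 : ∀ w v : W, (f w x2 = f v x1 ↔ f w x3 = f v x1) := by
    intro w v; simpa using h2 1 0 w v
  have fwd : ∀ (c d : Fin 4) (w v : W),
      f w (![x1,x2,s,t] c) = f v (![x1,x2,s,t] d) →
        f w (![x2,x1,s,t] c) = f v (![x2,x1,s,t] d) := by
    intro c d w v h
    fin_cases c <;> fin_cases d <;>
      simp only [Matrix.cons_val_zero, Matrix.cons_val_one, Matrix.head_cons,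
        Matrix.cons_val_two, Matrix.tail_cons, Matrix.cons_val_three,
        Matrix.cons_val_fin_one, Fin.isValue] at h ⊢
    · exact (h1_00 w v).1 h
    · have e1 : f w x2 = f v x3 := (h1_01 w v).1 h
      have e2 : f w x1 = f v x3 := (h2_01 w v).1 h
      have e3 : f w x1 = f w x2 := e2.trans e1.symm
      have e4 : f v x2 = f v x3 := h.symm.trans e2
      have e5 : f v x1 = f v x2 := (h1_01 v v).2 e4
      exact (e3.symm.trans h).trans e5.symm
    · exact (h1_02 w v).1 h
    · exact (h1_03 w v).1 h
    · have e1 : f w x3 = f v x2 := (h1_10 w v).1 h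
      have e2 : f w x3 = f v x1 := (h2_10 w v).1 h
      have e3 : f w x2 = f w x3 := h.trans e2.symm
      have e4 : f v x1 = f v x2 := e2.symm.trans e1
      have e5 : f w x1 = f w x2 := (h1_01 w w).2 e3
      exact e5.trans (h.trans e4)
    · exact (h1_00 w v).2 h
    · exact (h1_02 w v).2 h
    · exact (h1_03 w v).2 h
    · exact (h1_20 w v).1 h
    · exact (h1_20 w v).2 h
    · exact h
    · exact h
    · exact (h1_30 w v).1 h
    · exact (h1_30 w v).2 h
    · exact h
    · exact h
  have hswap : ∀ c : Fin 4, ![x2,x1,s,t] c = ![x1,x2,s,t] (![1,0,2,3] c) := by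
    intro c; fin_cases c <;> simp
  have hswapswap : ∀ c : Fin 4, ![1,0,2,3] (![1,0,2,3] c) = c := by
    intro c; fin_cases c <;> simp
  intro c d w v
  constructor
  · exact fwd c d w v
  · intro h
    have h' : f w (![x1,x2,s,t] (![1,0,2,3] c)) = f v (![x1,x2,s,t] (![1,0,2,3] d)) := by
      rw [← hswap, ← hswap]; exact h
    have := fwd (![1,0,2,3] c) (![1,0,2,3] d) w v h'
    rwa [hswap, hswap, hswapswap, hswapswap] at this

/-- The depth-`k` neighborhood vector of the tuple `(x, y, s, t)`: for each component
and each term of depth at most `k`, the resulting value. -/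
def nvec4 {F X : Type} (interp : F → X → X) (k : ℕ) (x y s t : X) :
    Fin 4 × Wd F k → X :=
  fun p => evalW interp p.2.1 (![x, y, s, t] p.1)

/-- For a finite signature of unary function symbols and a depth bound `m`, for every
sufficiently large `n`: in every structure containing pairwise distinct elements
`a_1, ..., a_n, s, t` there are indices `i < j` such that the equality types of the
depth-`(m+1)` neighborhood vectors of `(a_i, a_j, s, t)` and `(a_j, a_i, s, t)`
coincide. -/
theorem ramsey_equality_types (F : Type) [Fintype F] (m : ℕ) :
    ∃ N : ℕ, ∀ n : ℕ, N ≤ n → ∀ (X : Type) (interp : F → X → X)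
      (a : Fin n → X) (s t : X),
      Function.Injective a → (∀ i, a i ≠ s) → (∀ i, a i ≠ t) → s ≠ t →
      ∃ i j : Fin n, i < j ∧
        ∀ p q : Fin 4 × Wd F (m + 1),
          (nvec4 interp (m + 1) (a i) (a j) s t p
              = nvec4 interp (m + 1) (a i) (a j) s t q
            ↔ nvec4 interp (m + 1) (a j) (a i) s t p
              = nvec4 interp (m + 1) (a j) (a i) s t q) := by
  classical
  set P := (Fin 4 × Wd F (m + 1)) × (Fin 4 × Wd F (m + 1)) with hP
  letI : Fintype (P → Bool) := Fintype.ofFinite _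
  refine ⟨gfun (Fintype.card (P → Bool)) (Fintype.card (P → Bool) + 2), ?_⟩
  intro n hn X interp a s t _ _ _ _
  set χ : Fin n → Fin n → (P → Bool) := fun i j pq =>
    decide (nvec4 interp (m + 1) (a i) (a j) s t pq.1
      = nvec4 interp (m + 1) (a i) (a j) s t pq.2) with hχ
  obtain ⟨i, j, l, hij, hjl, e1, e2⟩ := triangle_lemma χ hn
  have E1 : ∀ p q : Fin 4 × Wd F (m + 1),
      (nvec4 interp (m + 1) (a i) (a j) s t p = nvec4 interp (m + 1) (a i) (a j) s t q)
      ↔ (nvec4 interp (m + 1) (a j) (a l) s t p = nvec4 interp (m + 1) (a j) (a l) s t q) := by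
    intro p q
    have := congrFun e1 (p, q)
    simpa [hχ, decide_eq_decide] using this
  have E2 : ∀ p q : Fin 4 × Wd F (m + 1),
      (nvec4 interp (m + 1) (a i) (a j) s t p = nvec4 interp (m + 1) (a i) (a j) s t q)
      ↔ (nvec4 interp (m + 1) (a i) (a l) s t p = nvec4 interp (m + 1) (a i) (a l) s t q) := by
    intro p q
    have := congrFun e2 (p, q)
    simpa [hχ, decide_eq_decide] using this
  have K := key_lemma (fun (w : Wd F (m + 1)) (x : X) => evalW interp w.1 x)
    s t (a i) (a j) (a l)
    (fun c d w v => E1 (c, w) (d, v)) (fun c d w v => E2 (c, w) (d, v))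
  exact ⟨i, j, hij, fun p q => K p.1 q.1 p.2 q.2⟩
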